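/- Let H be a real inner product space, λ > 0, and let L_1, …, L_{mα} : H → ℝ be convex differentiable loss terms. Let f minimize g ↦ (1/(mn)) Σ_{j=1}^{mα} L_j(g) + (λ/2)‖g‖² and let f^{∖i′} minimize the same objective with the i′-th term L_{i′} omitted. Suppose L_{i′}(g) = Σ_{k=1}^{n′} c_k(E_k(g)) with n′ = n/α, where each c_k : ℝ → ℝ is τ-Lipschitz and each E_k : H → ℝ is ρ-admissible at the mini-sample input x′_{i′}, and suppose ‖x′_{i′}‖ ≤ nv√d/α. Then for every evaluation functional E that is ρ-admissible at a test input x with ‖x‖ ≤ nv√d, it holds that |E(f) − E(f^{∖i′})| ≤ dτρ²v²n²/(mλα²); that is, the function stability Δ of f under removal of one mini-sample is bounded by dτρ²v²n²/(mλα²). -/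

import Mathlib

open Set Finset

open Finset Set

lemma norm_combo_sq {H : Type*} [NormedAddCommGroup H] [InnerProductSpace ℝ H]
    (a b : H) (t : ℝ) :
    ‖(1-t)•a + t•b‖^2 = (1-t)*‖a‖^2 + t*‖b‖^2 - t*(1-t)*‖a-b‖^2 := by
  have h : ∀ x : H, ‖x‖^2 = (inner ℝ x x : ℝ) := fun x => (real_inner_self_eq_norm_sq x).symm
  simp only [h, inner_add_left, inner_add_right, inner_sub_left, inner_sub_right,
    real_inner_smul_left, real_inner_smul_right, real_inner_comm a b]
  ring

lemma strong_min {H : Type*} [NormedAddCommGroup H] [InnerProductSpace ℝ H]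
    (loss : H → ℝ) (hc : ConvexOn ℝ univ loss) (lam : ℝ) (hlam : 0 < lam)
    (a : H) (ha : ∀ g, loss a + lam/2*‖a‖^2 ≤ loss g + lam/2*‖g‖^2) (b : H) :
    lam/2*‖a-b‖^2 ≤ (loss b + lam/2*‖b‖^2) - (loss a + lam/2*‖a‖^2) := by
  set A := (loss b + lam/2*‖b‖^2) - (loss a + lam/2*‖a‖^2) with hA
  set B := lam/2*‖a-b‖^2 with hB
  have hA0 : 0 ≤ A := by have := ha b; simp [hA]; linarith
  have key : ∀ t : ℝ, 0 < t → t < 1 → (1-t)*B ≤ A := by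
    intro t ht0 ht1
    have hmin := ha ((1-t)•a + t•b)
    have hcc := hc.2 (mem_univ a) (mem_univ b) (by linarith : (0:ℝ) ≤ 1-t)
      (le_of_lt ht0) (by ring)
    simp only [smul_eq_mul] at hcc
    have hn := norm_combo_sq a b t
    have h1 : loss a + lam/2*‖a‖^2 ≤ (1-t)*(loss a + lam/2*‖a‖^2)
        + t*(loss b + lam/2*‖b‖^2) - t*((1-t)*B) := by
      calc loss a + lam/2*‖a‖^2 ≤ loss ((1-t)•a + t•b) + lam/2*‖(1-t)•a + t•b‖^2 := hmin
        _ ≤ ((1-t)*loss a + t*loss b) + lam/2*((1-t)*‖a‖^2 + t*‖b‖^2 - t*(1-t)*‖a-b‖^2) := by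
            rw [hn]; linarith
        _ = (1-t)*(loss a + lam/2*‖a‖^2) + t*(loss b + lam/2*‖b‖^2) - t*((1-t)*B) := by
            simp only [hB]; ring
    have h2 : t*((1-t)*B) ≤ t*A := by simp only [hA]; nlinarith
    exact le_of_mul_le_mul_left h2 ht0
  by_contra hcon
  push_neg at hcon
  have hBpos : 0 < B := lt_of_le_of_lt hA0 hcon
  have ht := key ((B-A)/(2*B)) (div_pos (by linarith) (by linarith)) (by rw [div_lt_one (by linarith)]; linarith)
  have : (1 - (B-A)/(2*B))*B = (A+B)/2 := by field_simp; ring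
  rw [this] at ht
  clear_value A B
  linarith

lemma convexOn_finset_sum {ι H : Type*} [NormedAddCommGroup H] [InnerProductSpace ℝ H]
    (s : Finset ι) (f : ι → H → ℝ) (h : ∀ i ∈ s, ConvexOn ℝ Set.univ (f i)) :
    ConvexOn ℝ Set.univ (fun x => ∑ i ∈ s, f i x) := by
  classical
  induction s using Finset.induction with
  | empty => simpa using convexOn_const 0 convex_univ
  | insert x s hx ih =>
      simp only [Finset.sum_insert hx]
      exact (h _ (Finset.mem_insert_self _ _)).add
        (ih (fun i hi => h i (Finset.mem_insert_of_mem hi)))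

set_option maxHeartbeats 1000000 in
/-- **Function stability vs. structural complexity regularization (Theorem 3 of
the stability analysis).**  Under L2 regularization with structural complexity
regularization strength `α`, removing one mini-sample changes the value of any
ρ-admissible evaluation functional at a test input of norm at most `n v √d` by at
most `d τ ρ² v² n² / (m λ α²)`. -/
theorem function_stability_structural_regularization
    {H : Type*} [NormedAddCommGroup H] [InnerProductSpace ℝ H]
    (m n α d : ℕ) (hm : 0 < m) (hn : 0 < n) (hα : 0 < α) (hdvd : α ∣ n)
    (L : Fin (m * α) → H → ℝ)
    (hconv : ∀ j, ConvexOn ℝ univ (L j))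
    (hdiff : ∀ j, Differentiable ℝ (L j))
    (lam : ℝ) (hlam : 0 < lam)
    (i' : Fin (m * α)) (f f' : H)
    (hf : ∀ g : H,
      (1 / ((m : ℝ) * n)) * ∑ j, L j f + lam / 2 * ‖f‖ ^ 2
        ≤ (1 / ((m : ℝ) * n)) * ∑ j, L j g + lam / 2 * ‖g‖ ^ 2)
    (hf' : ∀ g : H,
      (1 / ((m : ℝ) * n)) * ∑ j ∈ univ.erase i', L j f' + lam / 2 * ‖f'‖ ^ 2
        ≤ (1 / ((m : ℝ) * n)) * ∑ j ∈ univ.erase i', L j g + lam / 2 * ‖g‖ ^ 2)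
    (τ ρ v xnorm : ℝ) (hτ : 0 ≤ τ) (hρ : 0 ≤ ρ) (hv : 0 ≤ v) (hx : 0 ≤ xnorm)
    (c : Fin (n / α) → ℝ → ℝ) (E : Fin (n / α) → H → ℝ)
    (hdecomp : ∀ g : H, L i' g = ∑ k, c k (E k g))
    (hlip : ∀ (k : Fin (n / α)) (a b : ℝ), |c k a - c k b| ≤ τ * |a - b|)
    (hadm : ∀ (k : Fin (n / α)) (g g' : H),
      |E k g - E k g'| ≤ ρ * ‖g - g'‖ * xnorm)
    (hxbound : xnorm ≤ (n : ℝ) * v * Real.sqrt d / α) :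
    ∀ (Etest : H → ℝ) (xt : ℝ), 0 ≤ xt → xt ≤ (n : ℝ) * v * Real.sqrt d →
      (∀ g g' : H, |Etest g - Etest g'| ≤ ρ * ‖g - g'‖ * xt) →
      |Etest f - Etest f'|
        ≤ (d : ℝ) * τ * ρ ^ 2 * v ^ 2 * n ^ 2 / ((m : ℝ) * lam * α ^ 2) := by
  intro Etest xt hxt0 hxtb hEtest
  have hm' : (0:ℝ) < m := by exact_mod_cast hm
  have hn' : (0:ℝ) < n := by exact_mod_cast hn
  have hα' : (0:ℝ) < α := by exact_mod_cast hα
  have hsd : (0:ℝ) ≤ Real.sqrt d := Real.sqrt_nonneg _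
  set C : ℝ := 1 / ((m : ℝ) * n) with hC
  have hC0 : 0 < C := by positivity
  have conv1 : ConvexOn ℝ Set.univ (fun g : H => C * ∑ j, L j g) := by
    have := convexOn_finset_sum Finset.univ L (fun j _ => hconv j)
    simpa [smul_eq_mul] using this.smul (le_of_lt hC0)
  have conv2 : ConvexOn ℝ Set.univ (fun g : H => C * ∑ j ∈ univ.erase i', L j g) := by
    have := convexOn_finset_sum (univ.erase i') L (fun j _ => hconv j)
    simpa [smul_eq_mul] using this.smul (le_of_lt hC0)
  have h1 := strong_min (fun g : H => C * ∑ j, L j g) conv1 lam hlam f hf f'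
  have h2 := strong_min (fun g : H => C * ∑ j ∈ univ.erase i', L j g) conv2 lam hlam f' hf' f
  set D : ℝ := ‖f - f'‖ with hD
  have hD0 : 0 ≤ D := norm_nonneg _
  have hDrev : ‖f' - f‖ = D := by rw [hD, norm_sub_rev]
  rw [hDrev] at h2
  have hsplit : ∀ g : H, ∑ j, L j g = L i' g + ∑ j ∈ univ.erase i', L j g := by
    intro g
    exact (Finset.add_sum_erase Finset.univ (fun j => L j g) (Finset.mem_univ i')).symm
  rw [hsplit f, hsplit f'] at h1
  simp only [mul_add] at h1
  have hcomb : lam * D ^ 2 ≤ C * L i' f' - C * L i' f := by linarith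
  have hnn0 : (0:ℝ) ≤ ((n / α : ℕ) : ℝ) := Nat.cast_nonneg _
  have hLdiff : L i' f' - L i' f ≤ ((n / α : ℕ) : ℝ) * (τ * (ρ * D * xnorm)) := by
    rw [hdecomp f', hdecomp f, ← Finset.sum_sub_distrib]
    calc ∑ k, (c k (E k f') - c k (E k f))
        ≤ ∑ _k : Fin (n / α), τ * (ρ * D * xnorm) := by
          apply Finset.sum_le_sum
          intro k _
          calc c k (E k f') - c k (E k f) ≤ |c k (E k f') - c k (E k f)| := le_abs_self _
            _ ≤ τ * |E k f' - E k f| := hlip k _ _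
            _ ≤ τ * (ρ * ‖f' - f‖ * xnorm) := mul_le_mul_of_nonneg_left (hadm k f' f) hτ
            _ = τ * (ρ * D * xnorm) := by rw [hDrev]
      _ = ((n / α : ℕ) : ℝ) * (τ * (ρ * D * xnorm)) := by
          rw [Finset.sum_const, Finset.card_univ, Fintype.card_fin, nsmul_eq_mul]
  have hnαr : ((n / α : ℕ) : ℝ) = (n : ℝ) / α := by
    rw [eq_div_iff (ne_of_gt hα')]
    exact_mod_cast Nat.div_mul_cancel hdvd
  have hDB : D ≤ τ * ρ * xnorm * ((n / α : ℕ) : ℝ) * C / lam := by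
    rcases eq_or_lt_of_le hD0 with h0 | h0
    · rw [← h0]; positivity
    · have hK : lam * D ^ 2 ≤ (τ * ρ * xnorm * ((n / α : ℕ) : ℝ) * C) * D := by
        refine hcomb.trans ?_
        have h4 := mul_le_mul_of_nonneg_left hLdiff (le_of_lt hC0)
        nlinarith [h4]
      rw [le_div_iff₀ hlam]
      have h5 : (lam * D) * D ≤ (τ * ρ * xnorm * ((n / α : ℕ) : ℝ) * C) * D := by
        nlinarith [hK]
      have h6 := le_of_mul_le_mul_right h5 h0
      linarith
  have hfinal : |Etest f - Etest f'| ≤ ρ * (τ * ρ * xnorm * ((n / α : ℕ) : ℝ) * C / lam) * xt := by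
    calc |Etest f - Etest f'| ≤ ρ * ‖f - f'‖ * xt := hEtest f f'
      _ = ρ * D * xt := by rw [hD]
      _ ≤ ρ * (τ * ρ * xnorm * ((n / α : ℕ) : ℝ) * C / lam) * xt :=
          mul_le_mul_of_nonneg_right (mul_le_mul_of_nonneg_left hDB hρ) hxt0
  refine hfinal.trans ?_
  calc ρ * (τ * ρ * xnorm * ((n / α : ℕ) : ℝ) * C / lam) * xt
      ≤ ρ * (τ * ρ * ((n : ℝ) * v * Real.sqrt d / α) * ((n / α : ℕ) : ℝ) * C / lam)
          * ((n : ℝ) * v * Real.sqrt d) := by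
        gcongr <;> first
          | exact div_nonneg (by positivity) (le_of_lt hlam)
          | exact hx.trans hxbound
    _ = (d : ℝ) * τ * ρ ^ 2 * v ^ 2 * n ^ 2 / ((m : ℝ) * lam * α ^ 2) := by
        rw [hnαr, hC,
          show ((d:ℝ) * τ * ρ ^ 2 * v ^ 2 * n ^ 2)
            = τ * ρ ^ 2 * v ^ 2 * (n:ℝ) ^ 2 * (Real.sqrt d * Real.sqrt d) from by
              rw [Real.mul_self_sqrt (Nat.cast_nonneg d)]; ring]
        field_simp
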